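/- (Charlier inversion formula) For any parameter a and integers 0 ≤ j ≤ i: Σ_{k=j}^{i} C_{i-k}^{(-a)}(-x) · C_{k-j}^{(a)}(x) = δ_{ij}, where C_n^{(a)}(x) are the Charlier polynomials defined via the generating function e^{-at}(1+t)^x = Σ_{n≥0} C_n^{(a)}(x) t^n. -/

import Mathlib

open Finset Real

/-- Pochhammer symbol (rising factorial) `(a)_k`. -/
noncomputable def poch (a : ℝ) (k : ℕ) : ℝ := (ascPochhammer ℝ k).eval a

/-- Classical Laguerre polynomial `L_n^{(α)}(x)` for arbitrary parameter α. -/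
noncomputable def lag (α : ℝ) (n : ℕ) (x : ℝ) : ℝ :=
  ∑ k ∈ Finset.range (n + 1),
    (-1 : ℝ) ^ k * (poch (α + k + 1) (n - k) / (Nat.factorial (n - k))) *
      x ^ k / (Nat.factorial k)

/-- Classical Jacobi polynomial `P_n^{(α,β)}(x)` for arbitrary parameters. -/
noncomputable def jac (α β : ℝ) (n : ℕ) (x : ℝ) : ℝ :=
  ∑ k ∈ Finset.range (n + 1),
    (poch ((n : ℝ) + α + β + 1) k / (Nat.factorial k)) *
      (poch (α + k + 1) (n - k) / (Nat.factorial (n - k))) * ((x - 1) / 2) ^ k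

/-- Generalized binomial coefficient `C(x, k)`. -/
noncomputable def genBinom (x : ℝ) (k : ℕ) : ℝ :=
  (∏ j ∈ Finset.range k, (x - j)) / (Nat.factorial k)

/-- Charlier polynomial `C_n^{(a)}(x)`. -/
noncomputable def charlier (a : ℝ) (n : ℕ) (x : ℝ) : ℝ :=
  ∑ k ∈ Finset.range (n + 1), genBinom x k * (-a) ^ (n - k) / (Nat.factorial (n - k))

lemma smeval_descPoch (x : ℝ) (k : ℕ) :
    (descPochhammer ℤ k).smeval x = ∏ j ∈ Finset.range k, (x - j) := by
  induction k with
  | zero => simp [descPochhammer_zero, Polynomial.smeval_one]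
  | succ k ih =>
    rw [descPochhammer_succ_right, Polynomial.smeval_mul, ih, Finset.prod_range_succ,
      Polynomial.smeval_sub, Polynomial.smeval_X, Polynomial.smeval_natCast]
    simp

lemma genBinom_eq_choose (x : ℝ) (k : ℕ) : genBinom x k = Ring.choose x k := by
  have h := Ring.descPochhammer_eq_factorial_smul_choose x k
  rw [smeval_descPoch] at h
  have hk : (k.factorial : ℝ) ≠ 0 := Nat.cast_ne_zero.mpr k.factorial_ne_zero
  rw [genBinom, h, nsmul_eq_mul, mul_div_cancel_left₀ _ hk]

lemma vand (x y : ℝ) (n : ℕ) :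
    ∑ k ∈ Finset.range (n + 1), genBinom x k * genBinom y (n - k) = genBinom (x + y) n := by
  simp_rw [genBinom_eq_choose]
  rw [Ring.add_choose_eq n (Commute.all x y),
    Finset.Nat.sum_antidiagonal_eq_sum_range_succ_mk]

noncomputable def Bser (x : ℝ) : PowerSeries ℝ := PowerSeries.mk (genBinom x)
noncomputable def Eser (a : ℝ) : PowerSeries ℝ :=
  PowerSeries.mk (fun n => a ^ n / n.factorial)

lemma Bser_mul (x y : ℝ) : Bser x * Bser y = Bser (x + y) := by
  ext n
  rw [PowerSeries.coeff_mul, Finset.Nat.sum_antidiagonal_eq_sum_range_succ_mk]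
  simp only [Bser, PowerSeries.coeff_mk]
  exact vand x y n

lemma Eser_mul (a b : ℝ) : Eser a * Eser b = Eser (a + b) := by
  ext n
  rw [PowerSeries.coeff_mul, Finset.Nat.sum_antidiagonal_eq_sum_range_succ_mk]
  simp only [Eser, PowerSeries.coeff_mk]
  rw [add_pow, Finset.sum_div]
  refine Finset.sum_congr rfl fun k hk => ?_
  have hkn : k ≤ n := Nat.lt_succ_iff.mp (Finset.mem_range.mp hk)
  have h : ((n.choose k : ℝ)) * k.factorial * (n - k).factorial = n.factorial := by
    exact_mod_cast Nat.choose_mul_factorial_mul_factorial hkn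
  have h1 : (k.factorial : ℝ) ≠ 0 := Nat.cast_ne_zero.mpr k.factorial_ne_zero
  have h2 : ((n - k).factorial : ℝ) ≠ 0 := Nat.cast_ne_zero.mpr (n - k).factorial_ne_zero
  have h3 : (n.factorial : ℝ) ≠ 0 := Nat.cast_ne_zero.mpr n.factorial_ne_zero
  field_simp
  rw [← h]
  ring

lemma Bser_zero : Bser 0 = 1 := by
  ext n
  simp only [Bser, PowerSeries.coeff_mk, PowerSeries.coeff_one]
  rcases Nat.eq_zero_or_pos n with h | h
  · subst h; simp [genBinom]
  · rw [if_neg (Nat.pos_iff_ne_zero.mp h)]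
    rw [genBinom, Finset.prod_eq_zero (Finset.mem_range.mpr h) (by simp), zero_div]

lemma Eser_zero : Eser 0 = 1 := by
  ext n
  simp only [Eser, PowerSeries.coeff_mk, PowerSeries.coeff_one]
  rcases Nat.eq_zero_or_pos n with h | h
  · subst h; simp
  · rw [if_neg (Nat.pos_iff_ne_zero.mp h), zero_pow (Nat.pos_iff_ne_zero.mp h), zero_div]

lemma charlier_coeff (a : ℝ) (n : ℕ) (x : ℝ) :
    charlier a n x = PowerSeries.coeff (R := ℝ) n (Bser x * Eser (-a)) := by
  rw [PowerSeries.coeff_mul, Finset.Nat.sum_antidiagonal_eq_sum_range_succ_mk]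
  simp only [Bser, Eser, PowerSeries.coeff_mk, charlier]
  exact Finset.sum_congr rfl fun k _ => mul_div_assoc _ _ _

lemma key (a x : ℝ) (n : ℕ) :
    ∑ m ∈ Finset.range (n + 1), charlier (-a) (n - m) (-x) * charlier a m x =
      if n = 0 then 1 else 0 := by
  simp_rw [charlier_coeff]
  have hre := Finset.sum_range_reflect
    (fun m => (PowerSeries.coeff (R := ℝ) (n - m)) (Bser (-x) * Eser (- -a)) *
      (PowerSeries.coeff (R := ℝ) m) (Bser x * Eser (-a))) (n + 1)
  simp only [Nat.add_sub_cancel] at hre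
  rw [← hre]
  have : ∀ m ∈ Finset.range (n + 1),
      (PowerSeries.coeff (R := ℝ) (n - (n - m))) (Bser (-x) * Eser (- -a)) *
        (PowerSeries.coeff (R := ℝ) (n - m)) (Bser x * Eser (-a)) =
      (PowerSeries.coeff (R := ℝ) m) (Bser (-x) * Eser (- -a)) *
        (PowerSeries.coeff (R := ℝ) (n - m)) (Bser x * Eser (-a)) := by
    intro m hm
    rw [Nat.sub_sub_self (Nat.lt_succ_iff.mp (Finset.mem_range.mp hm))]
  rw [Finset.sum_congr rfl this,
    ← Finset.Nat.sum_antidiagonal_eq_sum_range_succ_mk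
      (fun p => (PowerSeries.coeff (R := ℝ) p.1) (Bser (-x) * Eser (- -a)) *
        (PowerSeries.coeff (R := ℝ) p.2) (Bser x * Eser (-a))),
    ← PowerSeries.coeff_mul]
  have hprod : Bser (-x) * Eser (- -a) * (Bser x * Eser (-a)) = 1 := by
    have : Bser (-x) * Eser (- -a) * (Bser x * Eser (-a)) =
        (Bser (-x) * Bser x) * (Eser (- -a) * Eser (-a)) := by ring
    rw [this, Bser_mul, Eser_mul, neg_add_cancel, neg_neg, add_neg_cancel,
      Bser_zero, Eser_zero, one_mul]
  rw [hprod, PowerSeries.coeff_one]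

theorem stmt10 (a : ℝ) (i j : ℕ) (hij : j ≤ i) (x : ℝ) :
    ∑ k ∈ Finset.Icc j i, charlier (-a) (i - k) (-x) * charlier a (k - j) x =
      if i = j then 1 else 0 := by
  have h1 : Finset.Icc j i = Finset.Ico j (i + 1) := rfl
  rw [h1, Finset.sum_Ico_eq_sum_range]
  have h2 : i + 1 - j = (i - j) + 1 := by omega
  rw [h2]
  have h3 : ∀ m ∈ Finset.range ((i - j) + 1),
      charlier (-a) (i - (j + m)) (-x) * charlier a ((j + m) - j) x =
      charlier (-a) ((i - j) - m) (-x) * charlier a m x := by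
    intro m hm
    congr 2 <;> omega
  rw [Finset.sum_congr rfl h3, key]
  congr 1
  simp only [eq_iff_iff]
  omega
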